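/- Index expectation over colorings: let G be a finite simple graph with chromatic number at most c, and let Ω be the finite set of proper c-colorings g: V → {1,...,c} with uniform probability. If for every vertex x and every k-vertex clique y in S(x) the probability that g(x) > g(u) for all u ∈ y equals 1/(k+1), then E[i_{g,x}(t)·t] = F_{S(x)}(t) and consequently f_G(t) = 1 + Σ_x F_{S(x)}(t). -/

import Mathlib

open Finset
open scoped Classical

/-- The f-polynomial of a finite simple graph. -/
noncomputable def fPoly {V : Type*} [Fintype V] (G : SimpleGraph V) (t : ℝ) : ℝ :=
  1 + ∑ k ∈ Finset.range (Fintype.card V), ((G.cliqueFinset (k + 1)).card : ℝ) * t ^ (k + 1)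

/-- The antiderivative `F_G(t) = ∫₀ᵗ f_G(s) ds = t + Σ_k f_k t^{k+2}/(k+2)`. -/
noncomputable def FPoly {V : Type*} [Fintype V] (G : SimpleGraph V) (t : ℝ) : ℝ :=
  t + ∑ k ∈ Finset.range (Fintype.card V),
    ((G.cliqueFinset (k + 1)).card : ℝ) * t ^ (k + 2) / (k + 2)

/-- The part of the unit sphere of `x` where `g` is smaller than `g x`. -/
def sphereSet {V : Type*} (G : SimpleGraph V) (g : V → ℝ) (x : V) : Set V :=
  {y | G.Adj x y ∧ g y < g x}

/-- The sub-level unit sphere `S_g(x)` as an induced subgraph. -/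
def sphereBelow {V : Type*} (G : SimpleGraph V) (g : V → ℝ) (x : V) :
    SimpleGraph (sphereSet G g x) :=
  G.induce (sphereSet G g x)

/-- The unit sphere `S(x)`: the induced subgraph on the neighbors of `x`. -/
def unitSphere {V : Type*} (G : SimpleGraph V) (x : V) : SimpleGraph (G.neighborSet x) :=
  G.induce (G.neighborSet x)

/-- The finite probability space of proper `c`-colorings of `G`. -/
def Colorings {V : Type*} (G : SimpleGraph V) (c : ℕ) : Type _ :=
  {g : V → Fin c // ∀ ⦃a b : V⦄, G.Adj a b → g a ≠ g b}

noncomputable instance {V : Type*} [Fintype V] (G : SimpleGraph V) (c : ℕ) :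
    Fintype (Colorings G c) := by
  unfold Colorings; infer_instance

/-- The real-valued function of a coloring. -/
def colorVal {V : Type*} {c : ℕ} (g : V → Fin c) : V → ℝ := fun v => ((g v : ℕ) : ℝ)

/- ### Auxiliary lemmas -/

attribute [-instance] Subtype.instDecidableEq

lemma cliqueFinset_card_of_lt' {W : Type*} [Fintype W] (H : SimpleGraph W) (n : ℕ)
    (h : Fintype.card W < n) : (H.cliqueFinset n).card = 0 := by
  rw [Finset.card_eq_zero, Finset.eq_empty_iff_forall_notMem]
  intro s hs
  rw [SimpleGraph.mem_cliqueFinset_iff] at hs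
  have := hs.card_eq
  have h2 := Finset.card_le_univ s
  omega

lemma fPoly_ext {W : Type*} [Fintype W] (H : SimpleGraph W) (t : ℝ) (m : ℕ)
    (hm : Fintype.card W ≤ m) :
    fPoly H t = 1 + ∑ k ∈ Finset.range m, ((H.cliqueFinset (k + 1)).card : ℝ) * t ^ (k + 1) := by
  unfold fPoly
  congr 1
  apply Finset.sum_subset (Finset.range_subset_range.2 hm)
  intro k _ hk2
  rw [Finset.mem_range, not_lt] at hk2
  rw [cliqueFinset_card_of_lt' H (k + 1) (by omega)]
  simp

lemma FPoly_ext {W : Type*} [Fintype W] (H : SimpleGraph W) (t : ℝ) (m : ℕ)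
    (hm : Fintype.card W ≤ m) :
    FPoly H t
      = t + ∑ k ∈ Finset.range m, ((H.cliqueFinset (k + 1)).card : ℝ) * t ^ (k + 2) / (k + 2) := by
  unfold FPoly
  congr 1
  apply Finset.sum_subset (Finset.range_subset_range.2 hm)
  intro k _ hk2
  rw [Finset.mem_range, not_lt] at hk2
  rw [cliqueFinset_card_of_lt' H (k + 1) (by omega)]
  simp

lemma card_cliqueFinset_induce {V : Type*} [Fintype V] (G : SimpleGraph V) (s : Set V) [Fintype s] (n : ℕ) :
    ((G.induce s).cliqueFinset n).card
      = ((Finset.univ : Finset (Finset V)).filter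
          (fun y : Finset V => (↑y : Set V) ⊆ s ∧ G.IsClique (↑y : Set V) ∧ y.card = n)).card := by
  apply Finset.card_bij (fun (y : Finset s) _ => y.map ⟨Subtype.val, Subtype.val_injective⟩)
  · intro y hy
    rw [SimpleGraph.mem_cliqueFinset_iff] at hy
    simp only [Finset.mem_filter, Finset.mem_univ, true_and]
    refine ⟨?_, ?_, ?_⟩
    · intro v hv
      simp only [Finset.coe_map, Set.mem_image, Function.Embedding.coeFn_mk] at hv
      obtain ⟨u, _, rfl⟩ := hv
      exact u.2
    · intro a ha b hb hab
      simp only [Finset.coe_map, Set.mem_image, Function.Embedding.coeFn_mk] at ha hb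
      obtain ⟨a', ha', rfl⟩ := ha
      obtain ⟨b', hb', rfl⟩ := hb
      have := hy.1 ha' hb' (fun h => hab (by rw [h]))
      simpa using this
    · simpa using hy.card_eq
  · intro a _ b _ hab
    exact Finset.map_injective _ hab
  · intro z hz
    simp only [Finset.mem_filter, Finset.mem_univ, true_and] at hz
    obtain ⟨hsub, hcl, hcard⟩ := hz
    refine ⟨z.subtype (· ∈ s), SimpleGraph.mem_cliqueFinset_iff.2 ⟨?_, ?_⟩, ?_⟩
    · intro a ha b hb hab
      simp only [Finset.mem_coe, Finset.mem_subtype] at ha hb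
      have := hcl ha hb (fun h => hab (Subtype.ext h))
      simpa using this
    · rw [← hcard, Finset.card_subtype]
      congr 1
      apply Finset.filter_true_of_mem
      intro v hv; exact hsub hv
    · ext v
      simp only [Finset.mem_map, Finset.mem_subtype, Function.Embedding.coeFn_mk,
        Subtype.exists, exists_and_left]
      constructor
      · rintro ⟨u, hu, h2, rfl⟩; exact hu
      · intro hv; exact ⟨v, hv, hsub hv, rfl⟩

lemma cliqueFinset_one_card' {V : Type*} [Fintype V] (G : SimpleGraph V) :
    (G.cliqueFinset 1).card = Fintype.card V := by
  rw [← Finset.card_univ]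
  symm
  apply Finset.card_bij (fun (x : V) _ => ({x} : Finset V))
  · intro x _
    rw [SimpleGraph.mem_cliqueFinset_iff, SimpleGraph.isNClique_one]
    exact ⟨x, rfl⟩
  · intro a _ b _ h
    simpa using h
  · intro z hz
    rw [SimpleGraph.mem_cliqueFinset_iff, SimpleGraph.isNClique_one] at hz
    obtain ⟨a, rfl⟩ := hz
    exact ⟨a, Finset.mem_univ a, rfl⟩

lemma card_neighbor_cliques {V : Type*} [Fintype V] (G : SimpleGraph V) (x : V) (k : ℕ) :
    ((Finset.univ : Finset (Finset V)).filter
        (fun y : Finset V => (↑y : Set V) ⊆ G.neighborSet x ∧ G.IsClique (↑y : Set V)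
          ∧ y.card = k + 1)).card
      = ((G.cliqueFinset (k + 2)).filter (fun z => x ∈ z)).card := by
  apply Finset.card_bij (fun (y : Finset V) _ => insert x y)
  · intro y hy
    simp only [Finset.mem_filter, Finset.mem_univ, true_and] at hy
    obtain ⟨hsub, hcl, hcard⟩ := hy
    have hxy : x ∉ y := fun hx => G.irrefl (hsub hx)
    rw [Finset.mem_filter, SimpleGraph.mem_cliqueFinset_iff]
    refine ⟨⟨?_, ?_⟩, Finset.mem_insert_self x y⟩
    · rw [Finset.coe_insert]
      exact hcl.insert (fun b hb _ => hsub hb)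
    · rw [Finset.card_insert_of_notMem hxy, hcard]
  · intro a ha b hb hab
    simp only [Finset.mem_filter, Finset.mem_univ, true_and] at ha hb
    have hxa : x ∉ a := fun hx => G.irrefl (ha.1 hx)
    have hxb : x ∉ b := fun hx => G.irrefl (hb.1 hx)
    rw [← Finset.erase_insert hxa, ← Finset.erase_insert hxb, hab]
  · intro z hz
    rw [Finset.mem_filter, SimpleGraph.mem_cliqueFinset_iff] at hz
    obtain ⟨⟨hcl, hcard⟩, hx⟩ := hz
    refine ⟨z.erase x, ?_, Finset.insert_erase hx⟩
    simp only [Finset.mem_filter, Finset.mem_univ, true_and]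
    refine ⟨?_, hcl.subset (by simp [Finset.erase_subset]), ?_⟩
    · intro u hu
      simp only [Finset.coe_erase, Set.mem_diff, Set.mem_singleton_iff, Finset.mem_coe] at hu
      exact hcl hx hu.1 (fun h => hu.2 h.symm)
    · rw [Finset.card_erase_of_mem hx, hcard]
      omega

lemma sum_neighbor_cliques {V : Type*} [Fintype V] (G : SimpleGraph V) (k : ℕ) :
    ∑ x : V, ((Finset.univ : Finset (Finset V)).filter
        (fun y : Finset V => (↑y : Set V) ⊆ G.neighborSet x ∧ G.IsClique (↑y : Set V)
          ∧ y.card = k + 1)).card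
      = (k + 2) * (G.cliqueFinset (k + 2)).card := by
  simp only [card_neighbor_cliques]
  simp only [Finset.card_filter]
  rw [Finset.sum_comm]
  have h : ∀ z ∈ G.cliqueFinset (k + 2), (∑ x : V, if x ∈ z then 1 else 0) = k + 2 := by
    intro z hz
    rw [SimpleGraph.mem_cliqueFinset_iff] at hz
    rw [Finset.sum_boole]
    simp [Finset.filter_mem_eq_inter, hz.card_eq]
  rw [Finset.sum_congr rfl h, Finset.sum_const, smul_eq_mul, Nat.mul_comm]

lemma colorVal_lt_iff {V : Type*} {c : ℕ} (g : V → Fin c) (u x : V) :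
    colorVal g u < colorVal g x ↔ g u < g x := by
  unfold colorVal
  rw [Nat.cast_lt]
  exact Fin.lt_def.symm

lemma div_helper1 (m Nr t kr : ℝ) (k : ℕ) (hN : Nr ≠ 0) (hk : kr ≠ 0) :
    m * (Nr / kr) * (t * t ^ (k + 1)) / Nr = m * t ^ (k + 2) / kr := by
  have h : t * t ^ (k + 1) = t ^ (k + 2) := (pow_succ' t (k + 1)).symm
  rw [h]
  field_simp

lemma div_helper2 (m tk kr : ℝ) (hk : kr ≠ 0) : kr * m * (tk / kr) = m * tk := by
  field_simp

set_option maxHeartbeats 1000000 in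
/-- Index expectation over proper `c`-colorings: if for every vertex `x` and every
`k`-vertex clique `y` in `S(x)` the probability that `g x` exceeds `g` on all of `y` is
`1/(k+1)`, then `E[t·i_{g,x}(t)] = F_{S(x)}(t)` and hence `f_G(t) = 1 + Σ_x F_{S(x)}(t)`. -/
theorem index_expectation_colorings {V : Type*} [Fintype V] (G : SimpleGraph V) (c : ℕ)
    (hchrom : G.chromaticNumber ≤ (c : ℕ∞))
    (hhom : ∀ x : V, ∀ y : Finset V, (↑y : Set V) ⊆ G.neighborSet x →
      G.IsClique (y : Set V) → y.Nonempty →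
      ((Finset.univ.filter (fun gc : Colorings G c =>
          ∀ u ∈ y, gc.1 u < gc.1 x)).card : ℝ) / (Fintype.card (Colorings G c) : ℝ)
        = 1 / (y.card + 1)) :
    (∀ x : V, ∀ t : ℝ,
      (∑ gc : Colorings G c, t * fPoly (sphereBelow G (colorVal gc.1) x) t)
          / (Fintype.card (Colorings G c) : ℝ)
        = FPoly (unitSphere G x) t)
    ∧ (∀ t : ℝ, fPoly G t = 1 + ∑ x : V, FPoly (unitSphere G x) t) := by
  classical
  set n := Fintype.card V with hn
  -- the space of colorings is nonempty
  have hcol : G.Colorable c := by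
    rw [← SimpleGraph.chromaticNumber_le_iff_colorable]
    exact hchrom
  have hNpos : 0 < Fintype.card (Colorings G c) := by
    rw [Fintype.card_pos_iff]
    obtain ⟨C⟩ := hcol
    exact ⟨⟨⇑C, fun a b hab => C.valid hab⟩⟩
  have hN0 : (Fintype.card (Colorings G c) : ℝ) ≠ 0 := by positivity
  have hcard_nb : ∀ x : V, Fintype.card (G.neighborSet x) ≤ n :=
    fun x => Fintype.card_le_of_injective Subtype.val Subtype.val_injective
  constructor
  · -- Part 1
    intro x t
    have hcard_sph : ∀ g : V → ℝ, Fintype.card (sphereSet G g x) ≤ n :=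
      fun g => Fintype.card_le_of_injective Subtype.val Subtype.val_injective
    have key : ∀ k ∈ Finset.range n, (∑ gc : Colorings G c,
        (((sphereBelow G (colorVal gc.1) x).cliqueFinset (k + 1)).card : ℝ))
        = (((unitSphere G x).cliqueFinset (k + 1)).card : ℝ)
            * ((Fintype.card (Colorings G c) : ℝ) / (k + 2)) := by
      intro k _
      have step1 : ∀ gc : Colorings G c,
          (((sphereBelow G (colorVal gc.1) x).cliqueFinset (k + 1)).card : ℝ)
          = ∑ y : Finset V, (if (↑y : Set V) ⊆ sphereSet G (colorVal gc.1) x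
              ∧ G.IsClique (↑y : Set V) ∧ y.card = k + 1 then (1 : ℝ) else 0) := by
        intro gc
        have h1 : ((sphereBelow G (colorVal gc.1) x).cliqueFinset (k + 1)).card
            = ((Finset.univ : Finset (Finset V)).filter
                (fun y : Finset V => (↑y : Set V) ⊆ sphereSet G (colorVal gc.1) x
                  ∧ G.IsClique (↑y : Set V) ∧ y.card = k + 1)).card :=
          card_cliqueFinset_induce G (sphereSet G (colorVal gc.1) x) (k + 1)
        rw [h1, Finset.card_filter]
        push_cast
        rfl
      rw [Finset.sum_congr rfl (fun gc _ => step1 gc), Finset.sum_comm]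
      have step2 : ∀ y : Finset V,
          (∑ gc : Colorings G c, if (↑y : Set V) ⊆ sphereSet G (colorVal gc.1) x
              ∧ G.IsClique (↑y : Set V) ∧ y.card = k + 1 then (1 : ℝ) else 0)
          = if (↑y : Set V) ⊆ G.neighborSet x ∧ G.IsClique (↑y : Set V) ∧ y.card = k + 1
              then ((Fintype.card (Colorings G c) : ℝ) / (k + 2)) else 0 := by
        intro y
        by_cases hB : (↑y : Set V) ⊆ G.neighborSet x ∧ G.IsClique (↑y : Set V) ∧ y.card = k + 1
        · obtain ⟨hsub, hcl, hcard⟩ := hB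
          have hiff : ∀ gc : Colorings G c,
              ((↑y : Set V) ⊆ sphereSet G (colorVal gc.1) x
                ∧ G.IsClique (↑y : Set V) ∧ y.card = k + 1)
              ↔ (∀ u ∈ y, gc.1 u < gc.1 x) := by
            intro gc
            constructor
            · rintro ⟨hs, -, -⟩ u hu
              have h2 := (hs (Finset.mem_coe.2 hu)).2
              exact (colorVal_lt_iff gc.1 u x).1 h2
            · intro hall
              refine ⟨?_, hcl, hcard⟩
              intro u hu
              have hu' : u ∈ y := Finset.mem_coe.1 hu
              refine ⟨hsub hu, ?_⟩
              have := hall u hu'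
              exact (colorVal_lt_iff gc.1 u x).2 this
          simp only [hiff]
          rw [Finset.sum_boole, if_pos ⟨hsub, hcl, hcard⟩]
          have hne : y.Nonempty := Finset.card_pos.1 (by omega)
          have hh := hhom x y hsub hcl hne
          rw [hcard] at hh
          have hk2 : ((k : ℝ) + 2) ≠ 0 := by positivity
          have hk1 : ((k + 1 : ℕ) : ℝ) + 1 ≠ 0 := by positivity
          rw [div_eq_div_iff hN0 hk1] at hh
          rw [eq_div_iff hk2]
          push_cast at hh ⊢
          linarith
        · rw [if_neg hB]
          apply Finset.sum_eq_zero
          intro gc _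
          rw [if_neg]
          rintro ⟨hs, hcl2, hcard2⟩
          exact hB ⟨fun u hu => (hs hu).1, hcl2, hcard2⟩
      rw [Finset.sum_congr rfl (fun y _ => step2 y)]
      rw [Finset.sum_ite, Finset.sum_const_zero, add_zero, Finset.sum_const, nsmul_eq_mul]
      congr 2
      exact (card_cliqueFinset_induce G (G.neighborSet x) (k + 1)).symm
    have expand : ∀ gc : Colorings G c,
        t * fPoly (sphereBelow G (colorVal gc.1) x) t
        = t + ∑ k ∈ Finset.range n,
            (((sphereBelow G (colorVal gc.1) x).cliqueFinset (k + 1)).card : ℝ)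
              * (t * t ^ (k + 1)) := by
      intro gc
      rw [fPoly_ext _ t n (hcard_sph _), mul_add, mul_one, Finset.mul_sum]
      congr 1
      apply Finset.sum_congr rfl
      intro k _
      rw [mul_left_comm]
    rw [Finset.sum_congr rfl (fun gc _ => expand gc), Finset.sum_add_distrib,
      Finset.sum_const, Finset.sum_comm, nsmul_eq_mul]
    have hsums : (∑ k ∈ Finset.range n, ∑ gc : Colorings G c,
        (((sphereBelow G (colorVal gc.1) x).cliqueFinset (k + 1)).card : ℝ) * (t * t ^ (k + 1)))
        = ∑ k ∈ Finset.range n, (((unitSphere G x).cliqueFinset (k + 1)).card : ℝ)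
            * ((Fintype.card (Colorings G c) : ℝ) / (k + 2)) * (t * t ^ (k + 1)) := by
      apply Finset.sum_congr rfl
      intro k hk
      rw [← Finset.sum_mul, key k hk]
    rw [hsums, FPoly_ext (unitSphere G x) t n (hcard_nb x), add_div, Finset.sum_div,
      Finset.card_univ, mul_comm ((Fintype.card (Colorings G c) : ℝ)) t,
      mul_div_assoc, div_self hN0, mul_one]
    congr 1
    apply Finset.sum_congr rfl
    intro k _
    have hk2 : ((k : ℝ) + 2) ≠ 0 := by positivity
    exact div_helper1 _ _ _ _ k hN0 hk2
  · -- Part 2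
    intro t
    have hR : ∀ x : V, FPoly (unitSphere G x) t
        = t + ∑ k ∈ Finset.range n,
            (((unitSphere G x).cliqueFinset (k + 1)).card : ℝ) * t ^ (k + 2) / (k + 2) :=
      fun x => FPoly_ext (unitSphere G x) t n (hcard_nb x)
    rw [Finset.sum_congr rfl (fun x _ => hR x), Finset.sum_add_distrib, Finset.sum_const,
      Finset.sum_comm, nsmul_eq_mul, Finset.card_univ]
    have hsum : ∀ k ∈ Finset.range n, (∑ x : V,
        (((unitSphere G x).cliqueFinset (k + 1)).card : ℝ) * t ^ (k + 2) / (k + 2))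
        = ((G.cliqueFinset (k + 2)).card : ℝ) * t ^ (k + 2) := by
      intro k _
      have hk2 : ((k : ℝ) + 2) ≠ 0 := by positivity
      have hm : ∀ x : V, ((unitSphere G x).cliqueFinset (k + 1)).card
          = ((Finset.univ : Finset (Finset V)).filter
              (fun y : Finset V => (↑y : Set V) ⊆ G.neighborSet x ∧ G.IsClique (↑y : Set V)
                ∧ y.card = k + 1)).card :=
        fun x => card_cliqueFinset_induce G (G.neighborSet x) (k + 1)
      have htot : (∑ x : V, (((unitSphere G x).cliqueFinset (k + 1)).card : ℝ))
          = ((k : ℝ) + 2) * ((G.cliqueFinset (k + 2)).card : ℝ) := by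
        have := sum_neighbor_cliques G k
        simp only [hm]
        exact_mod_cast congrArg (fun m : ℕ => (m : ℝ)) this
      calc (∑ x : V, (((unitSphere G x).cliqueFinset (k + 1)).card : ℝ) * t ^ (k + 2) / (k + 2))
          = (∑ x : V, (((unitSphere G x).cliqueFinset (k + 1)).card : ℝ)) * (t ^ (k + 2) / (k + 2)) := by
            rw [Finset.sum_mul]
            apply Finset.sum_congr rfl
            intro x _
            ring
        _ = ((k : ℝ) + 2) * ((G.cliqueFinset (k + 2)).card : ℝ) * (t ^ (k + 2) / (k + 2)) := by
            rw [htot]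
        _ = ((G.cliqueFinset (k + 2)).card : ℝ) * t ^ (k + 2) := by
            exact div_helper2 _ _ _ hk2
    rw [Finset.sum_congr rfl hsum, fPoly_ext G t (n + 1) (Nat.le_succ n),
      Finset.sum_range_succ']
    have hterm : ∀ i ∈ Finset.range n,
        ((G.cliqueFinset (i + 1 + 1)).card : ℝ) * t ^ (i + 1 + 1)
          = ((G.cliqueFinset (i + 2)).card : ℝ) * t ^ (i + 2) := by
      intro i _
      norm_num
    rw [Finset.sum_congr rfl hterm]
    norm_num [cliqueFinset_one_card']
    ring
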